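/- Suppose γ = (γ_Λ) is a translation-invariant Gibbsian specification on Ω = E^ℤ. Then the function φ_γ(ω) = log [ γ_{{0}}(ω_0 | 𝐚_{−∞}^{−1} ω_1^{∞}) / γ_{{0}}(a | 𝐚_{−∞}^{−1} ω_1^{∞}) ] is continuous, has the extensibility property, and the Gibbsian specification γ^{φ_γ} associated with φ_γ coincides with γ. -/

import Mathlib

open Filter Topology MeasureTheory

namespace GP

/-- The configuration space `Ω = E^ℤ`. -/
abbrev Conf (E : Type*) := ℤ → E

variable {E : Type*}

/-- The shift by `i`: `(shiftZ i ω) k = ω (k + i)`.  The left shift `S` is `shiftZ 1`. -/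
def shiftZ (i : ℤ) (ω : Conf E) : Conf E := fun k => ω (k + i)

/-- The cylinder set determined by a word `w ∈ E^n` (placed on coordinates `0,…,n-1`). -/
def cylW {n : ℕ} (w : Fin n → E) : Set (Conf E) := {ω | ∀ j : Fin n, ω ((j : ℕ) : ℤ) = w j}

/-- The cylinder set `[ω_0^{n-1}]`. -/
def cylPt (ω : Conf E) (n : ℕ) : Set (Conf E) :=
  {ω' | ∀ j : ℕ, j < n → ω' (j : ℤ) = ω (j : ℤ)}

/-- Birkhoff sum `S_n φ = ∑_{k=0}^{n-1} φ ∘ S^k`. -/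
def birk (φ : Conf E → ℝ) (n : ℕ) (ω : Conf E) : ℝ :=
  ∑ k ∈ Finset.range n, φ (shiftZ (k : ℤ) ω)

/-- Topological pressure of `φ` on the full shift:
`P(φ) = lim_n (1/n) log ∑_{w ∈ E^n} sup_{ω ∈ [w]} exp (S_n φ (ω))`
(the limit exists; we use `limsup` as the defining expression). -/
noncomputable def press [Fintype E] (φ : Conf E → ℝ) : ℝ :=
  Filter.limsup (fun n : ℕ =>
    Real.log (∑ w : Fin n → E, sSup ((fun ω => Real.exp (birk φ n ω)) '' cylW w)) / n) atTop

/-- Kolmogorov–Sinai entropy of a shift-invariant measure on the full shift,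
computed along the canonical generating partition into cylinders
(the limit exists; we use `limsup` as the defining expression). -/
noncomputable def ent [Fintype E] [MeasurableSpace E] (μ : Measure (Conf E)) : ℝ :=
  Filter.limsup (fun n : ℕ =>
    (- ∑ w : Fin n → E, ((μ (cylW w)).toReal * Real.log (μ (cylW w)).toReal)) / n) atTop

/-- Shift invariance of a measure. -/
def ShiftInv [MeasurableSpace E] (μ : Measure (Conf E)) : Prop :=
  Measure.map (shiftZ 1) μ = μ

/-- `μ` is an equilibrium state for `φ`: `μ` is a shift-invariant Borel probability
measure with `h(μ) + ∫ φ dμ = P(φ)`. -/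
def IsEquilibrium [Fintype E] [MeasurableSpace E] (φ : Conf E → ℝ)
    (μ : Measure (Conf E)) : Prop :=
  IsProbabilityMeasure μ ∧ ShiftInv μ ∧ ent μ + ∫ ω, φ ω ∂μ = press φ

/-- `ω^c`: the configuration equal to `c` at site `0` and to `ω` elsewhere. -/
def upd0 (ω : Conf E) (c : E) : Conf E := Function.update ω 0 c

/-- Partial sums `ρ_n(ξ,η) = ∑_{i=-n}^{n} (φ(S^i ξ) - φ(S^i η))`. -/
noncomputable def rhoN (φ : Conf E → ℝ) (ξ η : Conf E) (n : ℕ) : ℝ :=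
  ∑ i ∈ Finset.Icc (-(n : ℤ)) (n : ℤ), (φ (shiftZ i ξ) - φ (shiftZ i η))

/-- `φ` has the extensibility property: for all `a b ∈ E`, the functions
`ω ↦ ∑_{i=-n}^{n} (φ(S^i(ω^b)) - φ(S^i(ω^a)))` converge uniformly as `n → ∞`. -/
def Extensible (φ : Conf E → ℝ) : Prop :=
  ∀ a b : E, ∃ r : Conf E → ℝ,
    TendstoUniformly (fun n ω => rhoN φ (upd0 ω b) (upd0 ω a) n) r atTop

/-- The cocycle `ρ^φ(ξ,η) = lim_n ∑_{i=-n}^{n} (φ(S^i ξ) - φ(S^i η))`. -/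
noncomputable def rho (φ : Conf E → ℝ) (ξ η : Conf E) : ℝ :=
  limUnder atTop (rhoN φ ξ η)

/-- `ξ` and `η` differ in at most finitely many coordinates. -/
def FinDiff (ξ η : Conf E) : Prop := {k : ℤ | ξ k ≠ η k}.Finite

/-- `ovr Λ ξ ω` is the configuration `ξ_Λ ω_{ℤ∖Λ}`, equal to `ξ` on `Λ` and to `ω` off `Λ`. -/
def ovr (Λ : Finset ℤ) (ξ : {k // k ∈ Λ} → E) (ω : Conf E) : Conf E :=
  fun k => if h : k ∈ Λ then ξ ⟨k, h⟩ else ω k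

/-- `γ` is a specification: each `γ_Λ(·|ω_{Λ^c})` is a probability distribution on `E^Λ`,
and the family is consistent (`γ_Λ = γ_Λ ∘ γ_V` for `V ⊆ Λ`); here `γ Λ ω` denotes
`γ_Λ(ω_Λ | ω_{Λ^c})`. -/
def IsSpecification [Fintype E] (γ : Finset ℤ → Conf E → ℝ) : Prop :=
  (∀ (Λ : Finset ℤ) (ω : Conf E), 0 ≤ γ Λ ω) ∧
  (∀ (Λ : Finset ℤ) (ω : Conf E), ∑ ξ : {k // k ∈ Λ} → E, γ Λ (ovr Λ ξ ω) = 1) ∧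
  (∀ V Λ : Finset ℤ, V ⊆ Λ → ∀ ω : Conf E,
     γ Λ ω = (∑ η : {k // k ∈ V} → E, γ Λ (ovr V η ω)) * γ V ω)

/-- Non-nullness: `inf_ω γ_Λ(ω_Λ|ω_{Λ^c}) > 0` for every finite `Λ`. -/
def NonNull (γ : Finset ℤ → Conf E → ℝ) : Prop :=
  ∀ Λ : Finset ℤ, ∃ c > (0 : ℝ), ∀ ω : Conf E, c ≤ γ Λ ω

/-- Continuity (quasilocality): `ω ↦ γ_Λ(ω_Λ|ω_{Λ^c})` is continuous for every finite `Λ`. -/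
def ContSpec [TopologicalSpace E] (γ : Finset ℤ → Conf E → ℝ) : Prop :=
  ∀ Λ : Finset ℤ, Continuous (γ Λ)

/-- A Gibbsian specification: a non-null continuous specification. -/
def IsGibbsSpec [Fintype E] [TopologicalSpace E] (γ : Finset ℤ → Conf E → ℝ) : Prop :=
  IsSpecification γ ∧ NonNull γ ∧ ContSpec γ

/-- Translation invariance of a specification: `γ_{Λ+1} = γ_Λ ∘ S`. -/
def SpecTI (γ : Finset ℤ → Conf E → ℝ) : Prop :=
  ∀ (Λ : Finset ℤ) (ω : Conf E), γ (Λ.image (· + 1)) ω = γ Λ (shiftZ 1 ω)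

/-- `μ` is a DLR-Gibbs measure for the specification `γ`: `μ` is a Borel probability
measure satisfying the DLR equations `∫ γ_Λ(f|·) dμ = ∫ f dμ` for every finite `Λ`
and every continuous `f` (equivalently, each `γ_Λ` is a version of the conditional
probabilities of `μ`). -/
def IsDLRGibbs [Fintype E] [MeasurableSpace E] [TopologicalSpace E]
    (γ : Finset ℤ → Conf E → ℝ) (μ : Measure (Conf E)) : Prop :=
  IsProbabilityMeasure μ ∧
  ∀ (Λ : Finset ℤ) (f : Conf E → ℝ), Continuous f →
    ∫ ω, (∑ ξ : {k // k ∈ Λ} → E, γ Λ (ovr Λ ξ ω) * f (ovr Λ ξ ω)) ∂μ = ∫ ω, f ω ∂μ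

/-- The specification `γ^φ` associated with an extensible potential `φ`:
`γ^φ_Λ(ω_Λ|ω_{Λ^c}) = (∑_{ξ_Λ ∈ E^Λ} exp ρ^φ(ξ_Λ ω_{ℤ∖Λ}, ω))⁻¹`. -/
noncomputable def specOf [Fintype E] (φ : Conf E → ℝ) : Finset ℤ → Conf E → ℝ :=
  fun Λ ω => (∑ ξ : {k // k ∈ Λ} → E, Real.exp (rho φ (ovr Λ ξ ω) ω))⁻¹

/-- The configuration `𝐚_{-∞}^{-1} b ω_1^{∞}`: equal to `a` at all negative
coordinates, to `b` at coordinate `0`, and to `ω` at positive coordinates. -/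
def bca (a : E) (ω : Conf E) (b : E) : Conf E :=
  fun k => if k < 0 then a else if k = 0 then b else ω k

/-- The potential associated with a specification:
`φ_γ(ω) = log (γ_{{0}}(ω_0 | 𝐚_{-∞}^{-1} ω_1^{∞}) / γ_{{0}}(a | 𝐚_{-∞}^{-1} ω_1^{∞}))`. -/
noncomputable def phiOf (γ : Finset ℤ → Conf E → ℝ) (a : E) (ω : Conf E) : ℝ :=
  Real.log (γ ({0} : Finset ℤ) (bca a ω (ω 0)) / γ ({0} : Finset ℤ) (bca a ω a))

/-- `μ` is weak Bowen-Gibbs for `φ` with constant `P`. -/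
def WeakBowenGibbs [MeasurableSpace E] (μ : Measure (Conf E)) (φ : Conf E → ℝ)
    (P : ℝ) : Prop :=
  ∃ C : ℕ → ℝ, (∀ n, 0 < C n) ∧
    Tendsto (fun n : ℕ => Real.log (C n) / n) atTop (𝓝 0) ∧
    ∀ (n : ℕ) (ω : Conf E),
      (C n)⁻¹ ≤ (μ (cylPt ω n)).toReal / Real.exp (birk φ n ω - n * P) ∧
      (μ (cylPt ω n)).toReal / Real.exp (birk φ n ω - n * P) ≤ C n



/-! ### Auxiliary lemmas for Statement 11 -/

lemma shiftZ_shiftZ (i j : ℤ) (ω : Conf E) : shiftZ i (shiftZ j ω) = shiftZ (i + j) ω := by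
  funext k; simp [shiftZ, add_assoc]

lemma shiftZ_zero (ω : Conf E) : shiftZ 0 ω = ω := by
  funext k; simp [shiftZ]

/-- The truncation: `a` below `i`, `ζ` at and above `i`. -/
def Vc (a : E) (i : ℤ) (ζ : Conf E) : Conf E := fun k => if k < i then a else ζ k

lemma pos_of_nonNull {γ : Finset ℤ → Conf E → ℝ} (h : NonNull γ) (Λ : Finset ℤ)
    (ω : Conf E) : 0 < γ Λ ω := by
  obtain ⟨c, hc, hle⟩ := h Λ; exact lt_of_lt_of_le hc (hle ω)

lemma spec_ti_singleton {γ : Finset ℤ → Conf E → ℝ} (hTI : SpecTI γ) :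
    ∀ (i : ℤ) (σ : Conf E), γ {i} σ = γ {0} (shiftZ i σ) := by
  have step : ∀ (i : ℤ) (ω : Conf E), γ {i + 1} ω = γ {i} (shiftZ 1 ω) := by
    intro i ω
    have h := hTI {i} ω
    simpa using h
  intro i
  induction i using Int.induction_on with
  | zero => intro σ; rw [shiftZ_zero]
  | succ n ih =>
    intro σ
    rw [step n σ, ih (shiftZ 1 σ), shiftZ_shiftZ]
  | pred n ih =>
    intro σ
    have h2 := step (-(n:ℤ) - 1) (shiftZ (-1) σ)
    have h3 : shiftZ 1 (shiftZ (-1) σ) = σ := by rw [shiftZ_shiftZ]; norm_num; exact shiftZ_zero σ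
    rw [h3] at h2
    have h4 : (-(n:ℤ) - 1) + 1 = -(n:ℤ) := by ring
    rw [h4] at h2
    rw [← h2, ih (shiftZ (-1) σ), shiftZ_shiftZ]
    ring_nf

lemma ratio_consist [Fintype E] {γ : Finset ℤ → Conf E → ℝ} (hs : IsSpecification γ)
    {V Λ : Finset ℤ} (hVΛ : V ⊆ Λ) {ξ η : Conf E} (hag : ∀ k, k ∉ V → ξ k = η k) :
    γ Λ ξ * γ V η = γ Λ η * γ V ξ := by
  obtain ⟨_, _, hcons⟩ := hs
  have hov : ∀ τ : {k // k ∈ V} → E, ovr V τ ξ = ovr V τ η := by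
    intro τ; funext k; unfold ovr; split
    · rfl
    · exact hag k ‹_›
  rw [hcons V Λ hVΛ ξ, hcons V Λ hVΛ η]
  simp_rw [hov]
  ring

lemma log_ratio_consist [Fintype E] {γ : Finset ℤ → Conf E → ℝ} (hs : IsSpecification γ)
    (hnn : NonNull γ) {V Λ : Finset ℤ} (hVΛ : V ⊆ Λ) {ξ η : Conf E}
    (hag : ∀ k, k ∉ V → ξ k = η k) :
    Real.log (γ Λ ξ) - Real.log (γ Λ η) = Real.log (γ V ξ) - Real.log (γ V η) := by
  have h := ratio_consist hs hVΛ hag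
  have := congrArg Real.log h
  rw [Real.log_mul (pos_of_nonNull hnn Λ ξ).ne' (pos_of_nonNull hnn V η).ne',
      Real.log_mul (pos_of_nonNull hnn Λ η).ne' (pos_of_nonNull hnn V ξ).ne'] at this
  linarith

lemma phi_shift {γ : Finset ℤ → Conf E → ℝ} (hnn : NonNull γ) (hTI : SpecTI γ)
    (a : E) (i : ℤ) (ζ : Conf E) :
    phiOf γ a (shiftZ i ζ) =
      Real.log (γ {i} (Vc a i ζ)) - Real.log (γ {i} (Vc a (i + 1) ζ)) := by
  have e1 : bca a (shiftZ i ζ) ((shiftZ i ζ) 0) = shiftZ i (Vc a i ζ) := by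
    funext k
    simp only [bca, shiftZ, Vc]
    rcases lt_trichotomy k 0 with h | h | h
    · rw [if_pos h, if_pos (by omega)]
    · subst h; rw [if_neg (by omega), if_pos rfl, if_neg (by omega)]
    · rw [if_neg (by omega), if_neg (by omega), if_neg (by omega)]
  have e2 : bca a (shiftZ i ζ) a = shiftZ i (Vc a (i + 1) ζ) := by
    funext k
    simp only [bca, shiftZ, Vc]
    rcases lt_trichotomy k 0 with h | h | h
    · rw [if_pos h, if_pos (by omega)]
    · subst h; rw [if_neg (by omega), if_pos rfl, if_pos (by omega)]
    · rw [if_neg (by omega), if_neg (by omega), if_neg (by omega)]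
  unfold phiOf
  rw [e1, e2, ← spec_ti_singleton hTI i, ← spec_ti_singleton hTI i,
    Real.log_div (pos_of_nonNull hnn _ _).ne' (pos_of_nonNull hnn _ _).ne']

lemma telescope_Icc (f : ℤ → ℝ) (a : ℤ) (m : ℕ) :
    ∑ i ∈ Finset.Icc a (a + m), (f i - f (i + 1)) = f a - f (a + m + 1) := by
  induction m with
  | zero => simp
  | succ m ih =>
    have h : Finset.Icc a (a + (m + 1 : ℕ)) = insert (a + m + 1) (Finset.Icc a (a + m)) := by
      ext k; simp only [Finset.mem_Icc, Finset.mem_insert]; omega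
    rw [h, Finset.sum_insert (by simp [Finset.mem_Icc])]
    rw [ih]
    push_cast
    ring_nf

lemma rhoN_eq [Fintype E] {γ : Finset ℤ → Conf E → ℝ} (hs : IsSpecification γ)
    (hnn : NonNull γ) (hTI : SpecTI γ) (a : E) (Λ : Finset ℤ) (ζ ω : Conf E)
    (hag : ∀ k, k ∉ Λ → ζ k = ω k) (n : ℕ) (hn : ∀ k ∈ Λ, k ≤ (n : ℤ)) :
    rhoN (phiOf γ a) ζ ω n =
      Real.log (γ Λ (Vc a (-(n : ℤ)) ζ)) - Real.log (γ Λ (Vc a (-(n : ℤ)) ω)) := by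
  set Λn : Finset ℤ := Finset.Icc (-(n : ℤ)) (n : ℤ) ∪ Λ with hΛn
  set f : ℤ → ℝ := fun i =>
    Real.log (γ Λn (Vc a i ζ)) - Real.log (γ Λn (Vc a i ω)) with hf
  have term : ∀ i ∈ Finset.Icc (-(n : ℤ)) (n : ℤ),
      phiOf γ a (shiftZ i ζ) - phiOf γ a (shiftZ i ω) = f i - f (i + 1) := by
    intro i hi
    rw [phi_shift hnn hTI, phi_shift hnn hTI]
    have hiΛn : ({i} : Finset ℤ) ⊆ Λn := by
      intro x hx
      simp only [Finset.mem_singleton] at hx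
      subst hx
      exact Finset.mem_union_left _ hi
    have ag : ∀ (ρ : Conf E) (k : ℤ), k ∉ ({i} : Finset ℤ) → Vc a i ρ k = Vc a (i + 1) ρ k := by
      intro ρ k hk
      simp only [Finset.mem_singleton] at hk
      unfold Vc
      rcases lt_or_ge k i with h | h
      · rw [if_pos h, if_pos (by omega)]
      · rw [if_neg (by omega), if_neg (by omega)]
    have h1 := log_ratio_consist hs hnn hiΛn (ag ζ)
    have h2 := log_ratio_consist hs hnn hiΛn (ag ω)
    simp only [hf]
    linarith
  rw [rhoN, Finset.sum_congr rfl term]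
  have tel : ∑ i ∈ Finset.Icc (-(n : ℤ)) (n : ℤ), (f i - f (i + 1))
      = f (-(n : ℤ)) - f ((n : ℤ) + 1) := by
    have h := telescope_Icc f (-(n : ℤ)) (2 * n)
    have e : -(n : ℤ) + ((2 * n : ℕ) : ℤ) = (n : ℤ) := by push_cast; ring
    rw [e] at h
    exact h
  rw [tel]
  have hzero : Vc a ((n : ℤ) + 1) ζ = Vc a ((n : ℤ) + 1) ω := by
    funext k
    unfold Vc
    split_ifs with h
    · rfl
    · refine hag k fun hk => ?_
      have := hn k hk
      omega
  have hsw := log_ratio_consist hs hnn (Finset.subset_union_right : Λ ⊆ Λn)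
      (ξ := Vc a (-(n : ℤ)) ζ) (η := Vc a (-(n : ℤ)) ω) ?_
  · simp only [hf, hzero]
    linarith
  · intro k hk
    unfold Vc
    split_ifs with h
    · rfl
    · exact hag k hk

lemma tendsto_Vc [TopologicalSpace E] (a : E) (ζ : Conf E) :
    Tendsto (fun n : ℕ => Vc a (-(n : ℤ)) ζ) atTop (𝓝 ζ) := by
  rw [tendsto_pi_nhds]
  intro k
  apply tendsto_const_nhds.congr'
  filter_upwards [eventually_ge_atTop (-k).toNat] with n hn
  have : ¬ (k < -(n : ℤ)) := by
    have hk : -k ≤ ((-k).toNat : ℤ) := Int.self_le_toNat _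
    have : ((-k).toNat : ℤ) ≤ (n : ℤ) := Int.ofNat_le.mpr hn
    omega
  simp [Vc, this]

/-- Uniform continuity on the compact product space: a continuous function is
determined up to `ε` by coordinates `≥ -N`. -/
lemma unif_cont [Finite E] [TopologicalSpace E] [DiscreteTopology E]
    (h : Conf E → ℝ) (hc : Continuous h) {ε : ℝ} (hε : 0 < ε) :
    ∃ N : ℕ, ∀ ζ ζ' : Conf E, (∀ k : ℤ, -(N : ℤ) ≤ k → ζ k = ζ' k) →
      |h ζ - h ζ'| < ε := by
  have key : ∀ ζ : Conf E, ∃ I : Finset ℤ,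
      ∀ ζ' : Conf E, (∀ k ∈ I, ζ' k = ζ k) → |h ζ' - h ζ| < ε / 2 := by
    intro ζ
    have hnb : {ζ' | |h ζ' - h ζ| < ε / 2} ∈ 𝓝 ζ := by
      have : Continuous fun ζ' => |h ζ' - h ζ| := (hc.sub continuous_const).abs
      have hopen : IsOpen {ζ' | |h ζ' - h ζ| < ε / 2} :=
        isOpen_lt this continuous_const
      exact hopen.mem_nhds (by simp [abs_of_nonneg, hε.le]; positivity)
    rw [nhds_pi, Filter.mem_pi] at hnb
    obtain ⟨I, hIfin, t, ht, hsub⟩ := hnb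
    refine ⟨hIfin.toFinset, fun ζ' hζ' => ?_⟩
    apply hsub
    intro k hk
    rw [hζ' k (hIfin.mem_toFinset.mpr hk)]
    exact mem_of_mem_nhds (ht k)
  choose I hI using key
  have hcov : (Set.univ : Set (Conf E)) ⊆
      ⋃ ζ : Conf E, Set.pi (I ζ : Set ℤ) (fun k => {ζ k}) := by
    intro ζ _
    exact Set.mem_iUnion.mpr ⟨ζ, fun k _ => rfl⟩
  obtain ⟨t, ht⟩ := isCompact_univ.elim_finite_subcover
    (fun ζ : Conf E => Set.pi (I ζ : Set ℤ) (fun k => {ζ k}))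
    (fun ζ => isOpen_set_pi (Finset.finite_toSet _) (fun k _ => isOpen_discrete _)) hcov
  refine ⟨t.sup (fun ζ₀ => (I ζ₀).sup (fun k => (-k).toNat)), fun ζ ζ' hag => ?_⟩
  obtain ⟨ζ₀, hζ₀t, hζ₀⟩ : ∃ ζ₀ ∈ t, ζ ∈ Set.pi (I ζ₀ : Set ℤ) (fun k => {ζ₀ k}) := by
    have := ht (Set.mem_univ ζ)
    simpa using this
  have hbd : ∀ k ∈ I ζ₀, -(((t.sup (fun ζ₀ => (I ζ₀).sup (fun k => (-k).toNat))) : ℕ) : ℤ) ≤ k := by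
    intro k hk
    have h1 : (-k).toNat ≤ (I ζ₀).sup (fun k => (-k).toNat) :=
      Finset.le_sup (f := fun k => (-k).toNat) hk
    have h2 : (I ζ₀).sup (fun k => (-k).toNat) ≤ t.sup (fun ζ₀ => (I ζ₀).sup (fun k => (-k).toNat)) :=
      Finset.le_sup (f := fun ζ₀ => (I ζ₀).sup fun k => (-k).toNat) hζ₀t
    have h3 : -k ≤ ((-k).toNat : ℤ) := Int.self_le_toNat _
    have : ((-k).toNat : ℤ) ≤ _ := Int.ofNat_le.mpr (h1.trans h2)
    omega
  have hζe : ∀ k ∈ I ζ₀, ζ k = ζ₀ k := fun k hk => hζ₀ k hk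
  have hζ'e : ∀ k ∈ I ζ₀, ζ' k = ζ₀ k := fun k hk => by
    rw [← hag k (hbd k hk)]; exact hζe k hk
  have e1 := hI ζ₀ ζ hζe
  have e2 := hI ζ₀ ζ' hζ'e
  calc |h ζ - h ζ'| ≤ |h ζ - h ζ₀| + |h ζ₀ - h ζ'| := abs_sub_le _ _ _
    _ < ε := by rw [abs_sub_comm (h ζ₀) (h ζ')] at *; linarith [e1, e2]

/-- For a translation-invariant Gibbsian specification `γ`, the
potential `φ_γ(ω) = log (γ_{{0}}(ω_0|𝐚_{-∞}^{-1}ω_1^∞) / γ_{{0}}(a|𝐚_{-∞}^{-1}ω_1^∞))`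
is continuous, has the extensibility property, and `γ^{φ_γ} = γ`. -/
theorem phiOf_extensible_and_specOf_phiOf [Fintype E] [Nonempty E] [TopologicalSpace E] [DiscreteTopology E]
    [MeasurableSpace E] [MeasurableSingletonClass E]
    (γ : Finset ℤ → Conf E → ℝ) (hγ : IsGibbsSpec γ) (hTI : SpecTI γ) (a : E) :
    Continuous (phiOf γ a) ∧ Extensible (phiOf γ a) ∧ specOf (phiOf γ a) = γ := by
  obtain ⟨hs, hnn, hcont⟩ := hγ
  have hpos := pos_of_nonNull hnn
  have hlog : ∀ Λ : Finset ℤ, Continuous fun σ : Conf E => Real.log (γ Λ σ) :=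
    fun Λ => (hcont Λ).log (fun σ => (hpos Λ σ).ne')
  refine ⟨?_, ?_, ?_⟩
  · -- Continuity of φ_γ
    have h1 : Continuous fun ω : Conf E => bca a ω (ω 0) := by
      apply continuous_pi
      intro k
      rcases lt_trichotomy k 0 with hk | hk | hk
      · simpa [bca, hk] using (continuous_const : Continuous fun _ : Conf E => a)
      · subst hk; simpa [bca] using continuous_apply (0 : ℤ)
      · have : (fun ω : Conf E => bca a ω (ω 0) k) = fun ω => ω k := by
          funext ω; simp [bca, hk.not_gt, hk.ne']
        rw [this]; exact continuous_apply k
    have h2 : Continuous fun ω : Conf E => bca a ω a := by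
      apply continuous_pi
      intro k
      rcases lt_trichotomy k 0 with hk | hk | hk
      · simpa [bca, hk] using (continuous_const : Continuous fun _ : Conf E => a)
      · subst hk; simpa [bca] using (continuous_const : Continuous fun _ : Conf E => a)
      · have : (fun ω : Conf E => bca a ω a k) = fun ω => ω k := by
          funext ω; simp [bca, hk.not_gt, hk.ne']
        rw [this]; exact continuous_apply k
    have hnum : Continuous fun ω : Conf E => γ {0} (bca a ω (ω 0)) := (hcont {0}).comp h1
    have hden : Continuous fun ω : Conf E => γ {0} (bca a ω a) := (hcont {0}).comp h2
    exact (hnum.div hden (fun ω => (hpos _ _).ne')).log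
      (fun ω => (div_pos (hpos _ _) (hpos _ _)).ne')
  · -- Extensibility
    intro a' b'
    set h : Conf E → ℝ := fun σ => Real.log (γ {0} σ) with hh
    refine ⟨fun ω => h (upd0 ω b') - h (upd0 ω a'), ?_⟩
    rw [Metric.tendstoUniformly_iff]
    intro ε hε
    obtain ⟨N, hN⟩ := unif_cont h (hlog {0}) (half_pos hε)
    filter_upwards [eventually_ge_atTop N] with n hn
    intro ω
    have hform : rhoN (phiOf γ a) (upd0 ω b') (upd0 ω a') n
        = h (Vc a (-(n : ℤ)) (upd0 ω b')) - h (Vc a (-(n : ℤ)) (upd0 ω a')) := by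
      apply rhoN_eq hs hnn hTI a {0}
      · intro k hk
        simp only [Finset.mem_singleton] at hk
        simp [upd0, Function.update_of_ne hk]
      · intro k hk
        simp only [Finset.mem_singleton] at hk
        subst hk
        exact_mod_cast Nat.zero_le n
    have hagV : ∀ ζ : Conf E, ∀ k : ℤ, -(N : ℤ) ≤ k → ζ k = Vc a (-(n : ℤ)) ζ k := by
      intro ζ k hk
      have hnN : (N : ℤ) ≤ (n : ℤ) := Int.ofNat_le.mpr hn
      simp only [Vc]
      rw [if_neg (by omega)]
    have e1 := hN (upd0 ω b') (Vc a (-(n : ℤ)) (upd0 ω b')) (hagV _)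
    have e2 := hN (upd0 ω a') (Vc a (-(n : ℤ)) (upd0 ω a')) (hagV _)
    rw [Real.dist_eq, hform]
    rw [abs_sub_lt_iff] at e1 e2 ⊢
    constructor <;> [skip; skip] <;> linarith [e1.1, e1.2, e2.1, e2.2]
  · -- γ^{φ_γ} = γ
    funext Λ ω
    have hrho : ∀ ξ : {k // k ∈ Λ} → E, rho (phiOf γ a) (ovr Λ ξ ω) ω
        = Real.log (γ Λ (ovr Λ ξ ω)) - Real.log (γ Λ ω) := by
      intro ξ
      obtain ⟨N, hNb⟩ : ∃ N : ℕ, ∀ k ∈ Λ, k ≤ (N : ℤ) :=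
        ⟨Λ.sup (fun k => k.toNat), fun k hk =>
          le_trans (Int.self_le_toNat k)
            (Int.ofNat_le.mpr (Finset.le_sup (f := fun k => k.toNat) hk))⟩
      apply Filter.Tendsto.limUnder_eq
      have hev : ∀ᶠ n : ℕ in atTop, rhoN (phiOf γ a) (ovr Λ ξ ω) ω n
          = Real.log (γ Λ (Vc a (-(n : ℤ)) (ovr Λ ξ ω)))
            - Real.log (γ Λ (Vc a (-(n : ℤ)) ω)) := by
        filter_upwards [eventually_ge_atTop N] with n hn
        refine rhoN_eq hs hnn hTI a Λ _ ω (fun k hk => by simp [ovr, hk]) n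
          (fun k hk => le_trans (hNb k hk) (Int.ofNat_le.mpr hn))
      refine Tendsto.congr' (Filter.EventuallyEq.symm hev) ?_
      have hc1 : Tendsto (fun n : ℕ => Real.log (γ Λ (Vc a (-(n : ℤ)) (ovr Λ ξ ω)))) atTop
          (𝓝 (Real.log (γ Λ (ovr Λ ξ ω)))) :=
        ((hlog Λ).tendsto _).comp (tendsto_Vc a _)
      have hc2 : Tendsto (fun n : ℕ => Real.log (γ Λ (Vc a (-(n : ℤ)) ω))) atTop
          (𝓝 (Real.log (γ Λ ω))) :=
        ((hlog Λ).tendsto _).comp (tendsto_Vc a _)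
      exact hc1.sub hc2
    simp only [specOf]
    have hterm : ∀ ξ : {k // k ∈ Λ} → E,
        Real.exp (rho (phiOf γ a) (ovr Λ ξ ω) ω) = γ Λ (ovr Λ ξ ω) * (γ Λ ω)⁻¹ := by
      intro ξ
      rw [hrho ξ, Real.exp_sub, Real.exp_log (hpos _ _), Real.exp_log (hpos _ _),
        div_eq_mul_inv]
    rw [Finset.sum_congr rfl (fun ξ _ => hterm ξ), ← Finset.sum_mul, hs.2.1 Λ ω, one_mul,
      inv_inv]

end GP
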